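/- arXiv:2111.12190 — 3 statements merged into one kernel-verified Lean document; each statement's English description precedes it below -/
import Mathlib

section
/- In the Iwahori-Hecke algebra of type $C_2$ over a field of characteristic $2$ specialization (or equivalently considering the $2$-canonical basis), the element $c_{sts} := b_{sts} + b_s$ satisfies $b_s \cdot b_{ts} = c_{sts}$, i.e., the product $b_s b_{ts}$ equals $b_s + b_{sts}$ and hence equals $c_{sts}$ exactly (not merely up to a unit). -/
/-- The Weyl group of type `C₂` (dihedral of order 8), elements listed by reduced word. -/
inductive C2 : Type
  | e | s | t | st | ts | sts | tst | w0
  deriving DecidableEq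

instance instFintypeC2 : Fintype C2 where
  elems := {C2.e, C2.s, C2.t, C2.st, C2.ts, C2.sts, C2.tst, C2.w0}
  complete := fun x => by cases x <;> simp

namespace C2

/-- Left multiplication by the simple reflection `s`. -/
def sMul : C2 → C2
  | e => s | s => e | t => st | st => t | ts => sts | sts => ts | tst => w0 | w0 => tst

/-- Left multiplication by the simple reflection `t`. -/
def tMul : C2 → C2
  | e => t | t => e | s => ts | ts => s | st => tst | tst => st | sts => w0 | w0 => sts

/-- The Coxeter length. -/
def len : C2 → ℕ
  | e => 0 | s => 1 | t => 1 | st => 2 | ts => 2 | sts => 3 | tst => 3 | w0 => 4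

end C2

open LaurentPolynomial

/-- Elements of the Hecke algebra of type `C₂` over `ℤ[v,v⁻¹]`, as coordinate vectors in the
standard basis `{H_w}`. -/
abbrev HeckeC2 : Type := C2 → LaurentPolynomial ℤ

namespace HeckeC2

/-- Left multiplication by `H_s`, determined by `H_s H_w = H_{sw}` if `ℓ(sw) > ℓ(w)` and
`H_s H_w = H_{sw} + (v⁻¹ - v) H_w` otherwise. -/
noncomputable def Ls (f : HeckeC2) : HeckeC2 := fun u =>
  f (C2.sMul u) + (if C2.len (C2.sMul u) < C2.len u then (T (-1) - T 1) * f u else 0)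

/-- Left multiplication by `H_t`. -/
noncomputable def Lt (f : HeckeC2) : HeckeC2 := fun u =>
  f (C2.tMul u) + (if C2.len (C2.tMul u) < C2.len u then (T (-1) - T 1) * f u else 0)

/-- Left multiplication by the standard basis element `H_w`. -/
noncomputable def Lw : C2 → HeckeC2 → HeckeC2
  | C2.e => id
  | C2.s => Ls
  | C2.t => Lt
  | C2.st => Ls ∘ Lt
  | C2.ts => Lt ∘ Ls
  | C2.sts => Ls ∘ Lt ∘ Ls
  | C2.tst => Lt ∘ Ls ∘ Lt
  | C2.w0 => Ls ∘ Lt ∘ Ls ∘ Lt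

/-- The product in the Hecke algebra, expanding the left factor in the standard basis. -/
noncomputable def mul (x y : HeckeC2) : HeckeC2 := fun u => ∑ w : C2, x w * Lw w y u

/-- The standard basis element `H_w`. -/
noncomputable def H (w : C2) : HeckeC2 := fun u => if u = w then 1 else 0

/-- The Kazhdan–Lusztig basis element `b_w = ∑_{y ≤ w} v^{ℓ(w) - ℓ(y)} H_y` (all KL polynomials
are trivial in dihedral type, and `y < w` iff `ℓ(y) < ℓ(w)`). -/
noncomputable def b (w : C2) : HeckeC2 := fun u =>
  if u = w then 1 else if C2.len u < C2.len w then T ((C2.len w : ℤ) - C2.len u) else 0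

end HeckeC2

open HeckeC2

lemma sum_C2 {M : Type*} [AddCommMonoid M] (f : C2 → M) :
    ∑ w : C2, f w = f C2.e + f C2.s + f C2.t + f C2.st + f C2.ts + f C2.sts + f C2.tst +
      f C2.w0 := by
  show Finset.sum _ _ = _
  rw [show (Finset.univ : Finset C2) = {C2.e, C2.s, C2.t, C2.st, C2.ts, C2.sts, C2.tst, C2.w0}
      from rfl]
  simp [Finset.sum_insert, Finset.mem_insert]
  abel

lemma mul_bs (y : HeckeC2) : mul (b C2.s) y = fun u => Ls y u + T 1 * y u := by
  funext u
  rw [mul, sum_C2]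
  simp [b, C2.len, Lw]
  ring

/-- In the Hecke algebra of type `C₂`, with the `2`-canonical basis element
`c_{sts} = b_{sts} + b_s`, the product `b_s ⬝ b_{ts}` equals `c_{sts}` exactly. -/
theorem C2_bs_bts_eq_csts (csts : HeckeC2)
    (hcsts : csts = fun u => b C2.sts u + b C2.s u) :
    mul (b C2.s) (b C2.ts) = csts := by
  subst hcsts
  funext u
  rw [mul_bs]
  cases u <;>
  · simp [Ls, b, C2.sMul, C2.len, -T_mul, ← T_add]
    try ring_nf
    try simp [-T_mul, ← T_add, sq]
    try ring_nf
end

section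
/- In the Iwahori-Hecke algebra of type $C_2$, the half twist $\half = H_{w_0}$ satisfies $\half \cdot b_s \equiv -v^0\, b_{sts} \pmod{I_{w_0}}$, where $I_{w_0}$ is the $\mathbb{Z}[v,v^{-1}]$-span of $b_{w_0}$; that is, $H_{w_0} b_s + b_{sts}$ is a $\mathbb{Z}[v,v^{-1}]$-multiple of $b_{w_0}$. -/
instance : Fintype C2 :=
  ⟨{C2.e, C2.s, C2.t, C2.st, C2.ts, C2.sts, C2.tst, C2.w0}, by intro x; cases x <;> simp⟩

open LaurentPolynomial

open HeckeC2

section Aux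
open C2

noncomputable def f1 : HeckeC2 := fun u => match u with
  | C2.t => T 1 | C2.ts => 1 | _ => 0
noncomputable def f2 : HeckeC2 := fun u => match u with
  | C2.st => T 1 | C2.sts => 1 | _ => 0
noncomputable def f3 : HeckeC2 := fun u => match u with
  | C2.tst => T 1 | C2.w0 => 1 | _ => 0
noncomputable def f4 : HeckeC2 := fun u => match u with
  | C2.tst => 1 | C2.w0 => T (-1) | _ => 0

lemma hf1 : Lt (b C2.s) = f1 := by
  funext u; cases u <;>
    simp [Lt, b, C2.tMul, C2.len, f1, sub_mul, ← T_add]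

lemma hf2 : Ls f1 = f2 := by
  funext u; cases u <;>
    simp [Ls, f1, f2, C2.sMul, C2.len, sub_mul, ← T_add]

lemma hf3 : Lt f2 = f3 := by
  funext u; cases u <;>
    simp [Lt, f2, f3, C2.tMul, C2.len, sub_mul, ← T_add]

lemma hf4 : Ls f3 = f4 := by
  funext u; cases u <;>
    simp [Ls, f3, f4, C2.sMul, C2.len, sub_mul, ← T_add]

end Aux

/-- The half twist `HT = H_{w₀}` of type `C₂` satisfies
`HT ⬝ b_s ≡ -v⁰ b_{sts}` modulo the span of `b_{w₀}`:
`H_{w₀} b_s + b_{sts}` is a `ℤ[v,v⁻¹]`-multiple of `b_{w₀}`. -/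
theorem C2_halftwist_bs :
    ∃ c : LaurentPolynomial ℤ,
      (fun u => mul (H C2.w0) (b C2.s) u + b C2.sts u) = fun u => c * b C2.w0 u := by
  use T (-1)
  funext u
  have hmul : mul (H C2.w0) (b C2.s) u = Lw C2.w0 (b C2.s) u := by
    simp [mul, H, ite_mul, one_mul, zero_mul, Finset.sum_ite_eq']
  rw [hmul]
  have : Lw C2.w0 (b C2.s) = f4 := by
    show Ls (Lt (Ls (Lt (b C2.s)))) = f4
    rw [hf1, hf2, hf3, hf4]
  rw [this]
  cases u <;>
    simp only [f4, b, C2.len, reduceCtorEq, if_false, if_true, Nat.cast_ofNat,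
      Nat.cast_one, Nat.cast_zero]
  case e =>
    rw [if_pos (by norm_num), if_pos (by norm_num), zero_add, ← T_add]
    congr 1
  case s =>
    rw [if_pos (by norm_num), if_pos (by norm_num), zero_add, ← T_add]
    congr 1
  case t =>
    rw [if_pos (by norm_num), if_pos (by norm_num), zero_add, ← T_add]
    congr 1
  case st =>
    show (0 + if (2:ℕ) < 3 then T ((3:ℤ) - 2) else 0) = T (-1) * if (2:ℕ) < 4 then T ((4:ℤ) - 2) else 0
    rw [if_pos (by norm_num), if_pos (by norm_num), zero_add, ← T_add]
    congr 1
  case ts =>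
    show (0 + if (2:ℕ) < 3 then T ((3:ℤ) - 2) else 0) = T (-1) * if (2:ℕ) < 4 then T ((4:ℤ) - 2) else 0
    rw [if_pos (by norm_num), if_pos (by norm_num), zero_add, ← T_add]
    congr 1
  case sts =>
    show 0 + 1 = T (-1) * if (3:ℕ) < 4 then T ((4:ℤ) - 3) else 0
    rw [if_pos (by norm_num), zero_add, ← T_add,
      show (-1 + ((4:ℤ) - 3) : ℤ) = 0 by ring, T_zero]
  case tst =>
    show (1 + if (3:ℕ) < 3 then T ((3:ℤ) - 3) else 0) = T (-1) * if (3:ℕ) < 4 then T ((4:ℤ) - 3) else 0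
    rw [if_neg (by norm_num), if_pos (by norm_num), add_zero, ← T_add,
      show (-1 + ((4:ℤ) - 3) : ℤ) = 0 by ring, T_zero]
  case w0 =>
    show (T (-1) + if (4:ℕ) < 3 then T ((3:ℤ) - 4) else 0) = T (-1) * 1
    rw [if_neg (by norm_num), add_zero, mul_one]
end

section
/- Over the ring $S = R \otimes_{R^W} R$ where $R = \mathbb{Q}[\alpha,\beta]$ and $R^W$ is the invariant subring for the $C_2$ Weyl group action, the $2\times 2$ matrices $d_1 = \begin{pmatrix} \gamma_l - \gamma_r & \alpha_l + \alpha_r \\ -\tfrac{\delta_l - \delta_r}{2} & \tfrac{\beta_l + \beta_r}{2} \end{pmatrix}$ and $d_2 = \begin{pmatrix} \tfrac{\beta_l + \beta_r}{2} & -(\alpha_l + \alpha_r) \\ \tfrac{\delta_l - \delta_r}{2} & \gamma_l - \gamma_r \end{pmatrix}$ satisfy $d_1 d_2 = d_2 d_1 = 0$. -/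
open MvPolynomial TensorProduct

noncomputable section

/-- `R = ℚ[α, β]` with `α = X 0`, `β = X 1`. -/
abbrev RQ : Type := MvPolynomial (Fin 2) ℚ

/-- The substitution `s : α ↦ -α, β ↦ 2α + β`. -/
def sQ : RQ →ₐ[ℚ] RQ := aeval ![-X 0, 2 * X 0 + X 1]

/-- The substitution `t : α ↦ α + β, β ↦ -β`. -/
def tQ : RQ →ₐ[ℚ] RQ := aeval ![X 0 + X 1, -X 1]

/-- The invariant subring `R^W` for the `C₂` Weyl group action on `R = ℚ[α,β]`. -/
def RW : Subalgebra ℚ RQ :=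
  AlgHom.equalizer sQ (AlgHom.id ℚ RQ) ⊓ AlgHom.equalizer tQ (AlgHom.id ℚ RQ)

/-- `S = R ⊗_{R^W} R`. -/
abbrev SC2 : Type := TensorProduct RW RQ RQ

/-- `f ↦ f_l = f ⊗ 1` in `S`. -/
def lft (f : RQ) : SC2 := f ⊗ₜ 1

/-- `f ↦ f_r = 1 ⊗ f` in `S`. -/
def rgt (f : RQ) : SC2 := 1 ⊗ₜ f


lemma lft_add (a b : RQ) : lft (a + b) = lft a + lft b := TensorProduct.add_tmul a b 1
lemma rgt_add (a b : RQ) : rgt (a + b) = rgt a + rgt b := TensorProduct.tmul_add 1 a b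
lemma lft_mul (a b : RQ) : lft (a * b) = lft a * lft b := by
  simp [lft, Algebra.TensorProduct.tmul_mul_tmul]
lemma rgt_mul (a b : RQ) : rgt (a * b) = rgt a * rgt b := by
  simp [rgt, Algebra.TensorProduct.tmul_mul_tmul]
lemma lft_one : lft (1 : RQ) = 1 := rfl
lemma rgt_one : rgt (1 : RQ) = 1 := rfl
lemma lft_two : lft (2 : RQ) = 2 := by
  have : (2 : RQ) = 1 + 1 := by ring
  rw [this, lft_add, lft_one]; ring
lemma rgt_two : rgt (2 : RQ) = 2 := by
  have : (2 : RQ) = 1 + 1 := by ring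
  rw [this, rgt_add, rgt_one]; ring

lemma lft_eq_rgt {f : RQ} (hf : f ∈ RW) : lft f = rgt f := by
  have h1 : lft f = algebraMap RW SC2 ⟨f, hf⟩ := by
    erw [Algebra.TensorProduct.algebraMap_apply]; rfl
  have h2 : rgt f = algebraMap RW SC2 ⟨f, hf⟩ := by
    erw [Algebra.TensorProduct.algebraMap_apply']; rfl
  rw [h1, h2]

lemma C_mem (c : ℚ) : C c ∈ RW := by
  constructor <;> simp [AlgHom.mem_equalizer, sQ, tQ, aeval_C, algebraMap_eq]

lemma q_mem : (2 * X 0 ^ 2 + 2 * X 0 * X 1 + X 1 ^ 2 : RQ) ∈ RW := by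
  have h1 : sQ (2 * X 0 ^ 2 + 2 * X 0 * X 1 + X 1 ^ 2 : RQ)
      = 2 * X 0 ^ 2 + 2 * X 0 * X 1 + X 1 ^ 2 := by
    simp only [sQ, map_add, map_mul, map_pow, map_ofNat, aeval_X,
      Matrix.cons_val_zero, Matrix.cons_val_one, Matrix.head_cons]
    ring
  have h2 : tQ (2 * X 0 ^ 2 + 2 * X 0 * X 1 + X 1 ^ 2 : RQ)
      = 2 * X 0 ^ 2 + 2 * X 0 * X 1 + X 1 ^ 2 := by
    simp only [tQ, map_add, map_mul, map_pow, map_ofNat, aeval_X,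
      Matrix.cons_val_zero, Matrix.cons_val_one, Matrix.head_cons]
    ring
  exact ⟨h1, h2⟩

set_option maxHeartbeats 2000000 in
/-- Over `S = R ⊗_{R^W} R` with `R = ℚ[α,β]`, `γ = α + β`, `δ = 2α + β`, the `2×2` matrices
`d₁ = [[γ_l - γ_r, α_l + α_r], [-(δ_l - δ_r)/2, (β_l + β_r)/2]]` and
`d₂ = [[(β_l + β_r)/2, -(α_l + α_r)], [(δ_l - δ_r)/2, γ_l - γ_r]]`
satisfy `d₁d₂ = d₂d₁ = 0`. -/
theorem C2_koszul_differentials_square_zero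
    (α β γ δ : RQ) (hα : α = X 0) (hβ : β = X 1) (hγ : γ = α + β) (hδ : δ = 2 * α + β)
    (d1 d2 : Matrix (Fin 2) (Fin 2) SC2)
    (hd1 : d1 = !![lft γ - rgt γ, lft α + rgt α;
                   -(lft (C (1/2 : ℚ) * δ) - rgt (C (1/2 : ℚ) * δ)),
                   lft (C (1/2 : ℚ) * β) + rgt (C (1/2 : ℚ) * β)])
    (hd2 : d2 = !![lft (C (1/2 : ℚ) * β) + rgt (C (1/2 : ℚ) * β), -(lft α + rgt α);
                   lft (C (1/2 : ℚ) * δ) - rgt (C (1/2 : ℚ) * δ), lft γ - rgt γ]) :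
    d1 * d2 = 0 ∧ d2 * d1 = 0 := by
  subst hγ hδ hα hβ hd1 hd2
  have hc : rgt (C (1/2 : ℚ)) = lft (C (1/2 : ℚ)) := (lft_eq_rgt (C_mem _)).symm
  have hkey := lft_eq_rgt q_mem
  have e : (2 * X 0 ^ 2 + 2 * X 0 * X 1 + X 1 ^ 2 : RQ)
      = 2 * (X 0 * X 0) + 2 * (X 0 * X 1) + X 1 * X 1 := by ring
  rw [e] at hkey
  simp only [lft_add, lft_mul, rgt_add, rgt_mul, lft_two, rgt_two] at hkey
  constructor <;> ext i j <;> fin_cases i <;> fin_cases j <;>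
    simp only [Matrix.mul_apply, Fin.sum_univ_two, Matrix.cons_val', Matrix.cons_val_zero,
      Matrix.cons_val_one, Matrix.head_cons, Matrix.head_fin_const, Matrix.empty_val',
      Matrix.cons_val_fin_one, Matrix.zero_apply, Matrix.of_apply, Fin.isValue, Fin.zero_eta,
      Fin.mk_one, lft_add, lft_mul, rgt_add, rgt_mul, lft_two, rgt_two, hc]
  all_goals try ring1
  all_goals linear_combination lft (C (1/2 : ℚ)) * hkey

end
end
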